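/- arXiv:2303.09255 — 3 statements merged into one kernel-verified Lean document; each statement's English description precedes it below -/
import Mathlib

section
/- Let X₁,...,Xₙ be i.i.d. classical random variables where each Xᵢ takes the value ⊥ with probability 1−p and otherwise takes a value in a finite alphabet 𝒳 with |𝒳 ∪ {⊥}| = d, and let Y₁,...,Yₙ be the indicator variables Yᵢ = 1[Xᵢ ≠ ⊥]. Then for any ε > 0, the ε-smooth conditional max-entropy satisfies H^ε_max(X₁ⁿ | Y₁ⁿ) ≤ n·p·log d + √((n/2)·ln(2/ε²))·log d. -/
noncomputable section

/-- A subnormalised classical distribution on a finite type. -/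
def SubDist {T : Type*} [Fintype T] (P : T → ℝ) : Prop :=
  (∀ t, 0 ≤ P t) ∧ ∑ t, P t ≤ 1

/-- Generalised fidelity between subnormalised classical distributions. -/
noncomputable def cGenFidelity {T : Type*} [Fintype T] (P Q : T → ℝ) : ℝ :=
  ((∑ t, Real.sqrt (P t * Q t)) +
    Real.sqrt ((1 - ∑ t, P t) * (1 - ∑ t, Q t))) ^ 2

/-- Purified distance between subnormalised classical distributions. -/
noncomputable def cPurifiedDist {T : Type*} [Fintype T] (P Q : T → ℝ) : ℝ :=
  Real.sqrt (1 - cGenFidelity P Q)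

/-- Conditional max-entropy `H_max(X|Y)_P = max_σ log F(P_{XY}, 𝟙_X ⊗ σ_Y)` of a
classical joint distribution. -/
noncomputable def cHmax {A B : Type*} [Fintype A] [Fintype B] (P : A × B → ℝ) : ℝ :=
  sSup {h : ℝ | ∃ σ : B → ℝ, (∀ y, 0 ≤ σ y) ∧ (∑ y, σ y) ≤ 1 ∧
    h = Real.logb 2 ((∑ x : A, ∑ y : B, Real.sqrt (P (x, y) * σ y)) ^ 2)}

/-- `ε`-smooth conditional max-entropy. -/
noncomputable def cHmaxSmooth {A B : Type*} [Fintype A] [Fintype B]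
    (ε : ℝ) (P : A × B → ℝ) : ℝ :=
  sInf {h : ℝ | ∃ P' : A × B → ℝ, SubDist P' ∧ cPurifiedDist P' P ≤ ε ∧ h = cHmax P'}

open scoped Classical in
/-- The i.i.d. joint distribution of `X₁ⁿ` (values in `Option 𝒳`, with `none = ⊥`)
together with the indicator variables `Yᵢ = 1[Xᵢ ≠ ⊥]`. -/
noncomputable def jointXY {X : Type*} [Fintype X] (n : ℕ) (q : Option X → ℝ) :
    ((Fin n → Option X) × (Fin n → Bool)) → ℝ :=
  fun xy => if ∀ i, xy.2 i = (xy.1 i).isSome then ∏ i, q (xy.1 i) else 0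


section Aux
open Finset Real

lemma sqrt_prod' {ι : Type*} (s : Finset ι) (f : ι → ℝ) (h : ∀ i ∈ s, 0 ≤ f i) :
    Real.sqrt (∏ i ∈ s, f i) = ∏ i ∈ s, Real.sqrt (f i) := by
  induction s using Finset.cons_induction with
  | empty => simp
  | cons a s ha ih =>
    rw [prod_cons, prod_cons, Real.sqrt_mul (h a (mem_cons_self _ _)),
      ih (fun i hi => h i (mem_cons_of_mem hi))]

lemma sum_fn_prod {n : ℕ} {T : Type*} [Fintype T] (f : Fin n → T → ℝ) :
    ∑ x : Fin n → T, ∏ i, f i (x i) = ∏ i, ∑ v, f i v := by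
  classical
  rw [Finset.prod_univ_sum, Fintype.piFinset_univ]

lemma den_pos {p : ℝ} (hp0 : 0 ≤ p) {x : ℝ} (hx : 0 ≤ x) :
    0 < 1 - p + p * Real.exp x := by
  nlinarith [Real.one_le_exp hx, Real.exp_pos x]

lemma hoeffding_scalar {p : ℝ} (hp0 : 0 ≤ p) (hp1 : p ≤ 1) {l : ℝ} (hl : 0 ≤ l) :
    1 - p + p * Real.exp l ≤ Real.exp (p * l + l ^ 2 / 8) := by
  set den : ℝ → ℝ := fun x => 1 - p + p * Real.exp x with hden
  set g : ℝ → ℝ := fun x => p + x / 4 - p * Real.exp x / den x with hg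
  have hdenD : ∀ x : ℝ, HasDerivAt den (p * Real.exp x) x := by
    intro x
    exact ((Real.hasDerivAt_exp x).const_mul p).const_add (1 - p)
  have hgpos : ∀ x : ℝ, 0 ≤ x → 0 ≤ g x := by
    intro x hx
    have hg0 : g 0 = 0 := by simp [hg, hden]
    have hgD : ∀ y ∈ Set.Ici (0:ℝ), HasDerivAt g
        (1 / 4 - (p * Real.exp y * den y - p * Real.exp y * (p * Real.exp y)) / (den y) ^ 2) y := by
      intro y hy
      have hd : den y ≠ 0 := (den_pos hp0 hy).ne'
      have h1 : HasDerivAt (fun z => p * Real.exp z / den z)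
          ((p * Real.exp y * den y - p * Real.exp y * (p * Real.exp y)) / (den y) ^ 2) y :=
        ((Real.hasDerivAt_exp y).const_mul p).div (hdenD y) hd
      have h2 : HasDerivAt (fun z : ℝ => p + z / 4) (1/4) y := by
        simpa using ((hasDerivAt_id y).div_const 4).const_add p
      exact h2.sub h1
    have hmono : MonotoneOn g (Set.Ici (0:ℝ)) := by
      apply monotoneOn_of_hasDerivWithinAt_nonneg (convex_Ici 0)
        (fun y hy => ((hgD y hy).continuousAt.continuousWithinAt))
        (fun y hy => ((hgD y (interior_subset hy)).hasDerivWithinAt))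
      intro y hy
      have hy' : (0:ℝ) ≤ y := le_of_lt (by simpa using hy)
      have hd : 0 < den y := den_pos hp0 hy'
      have hu0 : 0 ≤ p * Real.exp y := by positivity
      have hu1 : p * Real.exp y ≤ den y := by simp [hden]; nlinarith
      rw [sub_nonneg, div_le_iff₀ (by positivity)]
      nlinarith [sq_nonneg (p * Real.exp y - den y / 2)]
    have := hmono (Set.self_mem_Ici) (Set.mem_Ici.2 hx) hx
    rw [hg0] at this; exact this
  set f : ℝ → ℝ := fun x => p * x + x ^ 2 / 8 - Real.log (den x) with hf
  have hfD : ∀ y ∈ Set.Ici (0:ℝ), HasDerivAt f (g y) y := by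
    intro y hy
    have hd : den y ≠ 0 := (den_pos hp0 hy).ne'
    have h1 : HasDerivAt (fun z => Real.log (den z)) (p * Real.exp y / den y) y :=
      (hdenD y).log hd
    have h2 : HasDerivAt (fun z : ℝ => p * z + z ^ 2 / 8) (p + 2 * y / 8) y := by
      have h3 : HasDerivAt (fun z : ℝ => p * z) p y := by
        simpa using (hasDerivAt_id y).const_mul p
      exact (h3.add ((hasDerivAt_pow 2 y).div_const 8)).congr_deriv (by norm_num)
    have this : HasDerivAt (fun z => p * z + z ^ 2 / 8 - Real.log (den z))
        (p + 2 * y / 8 - p * Real.exp y / den y) y := h2.sub h1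
    convert this using 1
    simp [hg]; ring
  have hfmono : MonotoneOn f (Set.Ici (0:ℝ)) := by
    apply monotoneOn_of_hasDerivWithinAt_nonneg (convex_Ici 0)
      (fun y hy => ((hfD y hy).continuousAt.continuousWithinAt))
      (fun y hy => ((hfD y (interior_subset hy)).hasDerivWithinAt))
    intro y hy
    exact hgpos y (le_of_lt (by simpa using hy))
  have hf0 : f 0 = 0 := by simp [hf, hden]
  have hfl : 0 ≤ f l := by
    have := hfmono Set.self_mem_Ici (Set.mem_Ici.2 hl) hl
    rwa [hf0] at this
  have hdl : 0 < den l := den_pos hp0 hl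
  have hlog : Real.log (den l) ≤ p * l + l ^ 2 / 8 := by simp [hf] at hfl; linarith
  calc den l = Real.exp (Real.log (den l)) := (Real.exp_log hdl).symm
  _ ≤ _ := Real.exp_le_exp.2 hlog

/-- number of non-`none` coordinates -/
def kc {X : Type*} {n : ℕ} (x : Fin n → Option X) : ℕ :=
  (Finset.univ.filter fun i => (x i).isSome = true).card

end Aux

section Aux2
open Finset Real

variable {X : Type*} [Fintype X] {n : ℕ}

lemma prod_ite_zero' (c : Fin n → Prop) [DecidablePred c] (g : Fin n → ℝ) :
    (if ∀ i, c i then ∏ i, g i else 0) = ∏ i, if c i then g i else 0 := by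
  by_cases h : ∀ i, c i
  · rw [if_pos h]
    exact Finset.prod_congr rfl (fun i _ => (if_pos (h i)).symm)
  · rw [if_neg h]
    push_neg at h
    obtain ⟨i, hi⟩ := h
    exact (Finset.prod_eq_zero (i := i) (f := fun j => if c j then g j else 0)
      (mem_univ i) (if_neg hi)).symm

lemma jointXY_nonneg (q : Option X → ℝ) (hq0 : ∀ v, 0 ≤ q v)
    (t : (Fin n → Option X) × (Fin n → Bool)) : 0 ≤ jointXY n q t := by
  unfold jointXY
  split
  · exact Finset.prod_nonneg (fun i _ => hq0 _)
  · exact le_refl 0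

lemma sum_jointXY_y (q : Option X → ℝ) (x : Fin n → Option X) :
    ∑ y : Fin n → Bool, jointXY n q (x, y) = ∏ i, q (x i) := by
  classical
  rw [Finset.sum_eq_single_of_mem (fun i => (x i).isSome) (mem_univ _)]
  · exact if_pos (fun i => rfl)
  · intro b _ hb
    refine if_neg (fun h => hb ?_)
    exact funext h

lemma sum_jointXY (q : Option X → ℝ) (hq1 : ∑ v, q v = 1) :
    ∑ t, jointXY n q t = 1 := by
  rw [Fintype.sum_prod_type]
  rw [Finset.sum_congr rfl (fun x _ => sum_jointXY_y q x)]
  rw [sum_fn_prod (fun _ v => q v)]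
  simp [hq1]

lemma kc_eq_weight {x : Fin n → Option X} {y : Fin n → Bool}
    (h : ∀ i, y i = (x i).isSome) :
    kc x = (Finset.univ.filter fun i => y i = true).card := by
  unfold kc
  congr 1
  apply Finset.filter_congr
  intro i _
  rw [h i]

/-- The key "sum over x factorises given y" computation. -/
lemma sum_truncated (y : Fin n → Bool) (m : ℝ) (r : Option X → ℝ) :
    ∑ x : Fin n → Option X,
      (if (((Finset.univ.filter fun i => y i = true).card : ℝ) ≤ m ∧ ∀ i, y i = (x i).isSome)
        then ∏ i, r (x i) else 0) =
    if (((Finset.univ.filter fun i => y i = true).card : ℝ) ≤ m)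
      then ∏ i, (if y i = true then ∑ v : X, r (some v) else r none) else 0 := by
  classical
  by_cases hm : (((Finset.univ.filter fun i => y i = true).card : ℝ) ≤ m)
  · simp only [hm, true_and, if_true]
    calc ∑ x : Fin n → Option X, (if ∀ i, y i = (x i).isSome then ∏ i, r (x i) else 0)
        = ∑ x : Fin n → Option X, ∏ i, (if y i = (x i).isSome then r (x i) else 0) := by
          refine Finset.sum_congr rfl (fun x _ => ?_)
          exact prod_ite_zero' (fun i => y i = (x i).isSome) (fun i => r (x i))
      _ = ∏ i, ∑ v : Option X, (if y i = Option.isSome v then r v else 0) :=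
          sum_fn_prod (fun i v => if y i = Option.isSome v then r v else 0)
      _ = _ := by
          refine Finset.prod_congr rfl (fun i _ => ?_)
          rw [Fintype.sum_option]
          cases hyi : y i <;> simp
  · simp only [hm, false_and, if_false]
    simp

lemma chernoff_tail (q : Option X → ℝ) (hq0 : ∀ v, 0 ≤ q v) (p : ℝ)
    (hsome : ∑ v : X, q (some v) = p) (hqnone : q none = 1 - p)
    (l m : ℝ) (hl : 0 ≤ l) :
    ∑ x : Fin n → Option X, (if m < (kc x : ℝ) then ∏ i, q (x i) else 0)
      ≤ Real.exp (-(l * m)) * (1 - p + p * Real.exp l) ^ n := by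
  classical
  have hstep : ∀ x : Fin n → Option X,
      (if m < (kc x : ℝ) then ∏ i, q (x i) else 0)
        ≤ Real.exp (l * ((kc x : ℝ) - m)) * ∏ i, q (x i) := by
    intro x
    have hprod : 0 ≤ ∏ i, q (x i) := Finset.prod_nonneg fun i _ => hq0 _
    by_cases h : m < (kc x : ℝ)
    · rw [if_pos h]
      nlinarith [Real.one_le_exp (by nlinarith : 0 ≤ l * ((kc x : ℝ) - m))]
    · rw [if_neg h]; positivity
  refine le_trans (Finset.sum_le_sum fun x _ => hstep x) (le_of_eq ?_)
  have hkey : ∀ x : Fin n → Option X,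
      Real.exp (l * ((kc x : ℝ) - m)) * ∏ i, q (x i)
        = Real.exp (-(l * m)) *
            ∏ i, (q (x i) * Real.exp (l * (if (x i).isSome then (1:ℝ) else 0))) := by
    intro x
    have hkc : (kc x : ℝ) = ∑ i, (if (x i).isSome then (1:ℝ) else 0) := by
      unfold kc
      rw [Finset.card_filter]
      push_cast
      rfl
    have e1 : Real.exp (l * ((kc x : ℝ) - m))
        = Real.exp (-(l * m)) * Real.exp (l * (kc x : ℝ)) := by
      rw [← Real.exp_add]; ring_nf
    have e2 : Real.exp (l * (kc x : ℝ))
        = ∏ i, Real.exp (l * (if (x i).isSome then (1:ℝ) else 0)) := by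
      rw [hkc, Finset.mul_sum, Real.exp_sum]
    rw [e1, e2, Finset.prod_mul_distrib]
    ring
  rw [Finset.sum_congr rfl fun x _ => hkey x, ← Finset.mul_sum,
    sum_fn_prod (fun _ v => q v * Real.exp (l * (if Option.isSome v then (1:ℝ) else 0)))]
  congr 1
  have hv : ∑ v : Option X, q v * Real.exp (l * (if Option.isSome v then (1:ℝ) else 0))
      = 1 - p + p * Real.exp l := by
    rw [Fintype.sum_option]
    simp only [Option.isSome_none, Option.isSome_some, Bool.false_eq_true, if_true, if_false,
      mul_zero, mul_one, Real.exp_zero, hqnone]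
    rw [← Finset.sum_mul, hsome]
  rw [Finset.prod_congr rfl fun i _ => hv, Finset.prod_const, Finset.card_univ,
    Fintype.card_fin]


end Aux2

/-- Upper bound on the smooth conditional max-entropy of i.i.d. sparse classical data:
if each `Xᵢ` equals `⊥` with probability `1−p` and otherwise takes a value in `𝒳`
(with `|𝒳 ∪ {⊥}| = d`), and `Yᵢ` indicates `Xᵢ ≠ ⊥`, then for any `ε > 0`,
`H^ε_max(X₁ⁿ|Y₁ⁿ) ≤ n·p·log d + √((n/2)·ln(2/ε²))·log d`. -/
theorem smooth_max_entropy_sparse_iid {X : Type*} [Fintype X] (n : ℕ)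
    (p : ℝ) (hp0 : 0 ≤ p) (hp1 : p ≤ 1)
    (q : Option X → ℝ) (hq0 : ∀ x, 0 ≤ q x) (hq1 : ∑ x, q x = 1)
    (hqnone : q none = 1 - p)
    (ε : ℝ) (hε : 0 < ε) :
    cHmaxSmooth ε (jointXY n q) ≤
      (n : ℝ) * p * Real.logb 2 (Fintype.card X + 1) +
        Real.sqrt ((n : ℝ) / 2 * Real.log (2 / ε ^ 2)) *
          Real.logb 2 (Fintype.card X + 1) := by
  classical
  have hd1 : (1:ℝ) ≤ (Fintype.card X : ℝ) + 1 := by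
    have := Nat.cast_nonneg (α := ℝ) (Fintype.card X); linarith
  set d : ℝ := (Fintype.card X : ℝ) + 1 with hd
  set L : ℝ := Real.logb 2 d with hL
  have hL0 : 0 ≤ L := Real.logb_nonneg one_lt_two hd1
  set t : ℝ := Real.sqrt ((n : ℝ) / 2 * Real.log (2 / ε ^ 2)) with ht
  have ht0 : 0 ≤ t := Real.sqrt_nonneg _
  set m : ℝ := (n : ℝ) * p + t with hm
  have hm0 : 0 ≤ m := by rw [hm]; positivity
  set P : ((Fin n → Option X) × (Fin n → Bool)) → ℝ := jointXY n q with hP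
  have hP0 : ∀ tt, 0 ≤ P tt := jointXY_nonneg q hq0
  have hPsum : ∑ tt, P tt = 1 := sum_jointXY q hq1
  have hsome : ∑ v : X, q (some v) = p := by
    rw [Fintype.sum_option, hqnone] at hq1; linarith
  set P' : ((Fin n → Option X) × (Fin n → Bool)) → ℝ :=
    fun tt => if (kc tt.1 : ℝ) ≤ m then P tt else 0 with hP'
  have hP'0 : ∀ tt, 0 ≤ P' tt := by
    intro tt; rw [hP']; dsimp only; split
    · exact hP0 tt
    · exact le_refl 0
  have hP'le : ∀ tt, P' tt ≤ P tt := by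
    intro tt; rw [hP']; dsimp only; split
    · exact le_refl _
    · exact hP0 tt
  have hP'sum_le : ∑ tt, P' tt ≤ 1 := by
    rw [← hPsum]; exact Finset.sum_le_sum fun tt _ => hP'le tt
  set tail : ℝ := ∑ x : Fin n → Option X, (if m < (kc x : ℝ) then ∏ i, q (x i) else 0)
    with htail
  have htail0 : 0 ≤ tail := by
    rw [htail]
    refine Finset.sum_nonneg fun x _ => ?_
    split
    · exact Finset.prod_nonneg fun i _ => hq0 _
    · exact le_refl 0
  have hsplit : ∑ tt, P' tt = 1 - tail := by
    have h1 : ∀ tt, P tt - P' tt = (if m < (kc tt.1 : ℝ) then P tt else 0) := by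
      intro tt; rw [hP']; dsimp only
      rcases le_or_gt (kc tt.1 : ℝ) m with h | h
      · rw [if_pos h, if_neg (not_lt.2 h), sub_self]
      · rw [if_neg (not_le.2 h), if_pos h, sub_zero]
    have h2 : ∑ tt, (P tt - P' tt) = tail := by
      rw [Finset.sum_congr rfl fun tt _ => h1 tt, Fintype.sum_prod_type, htail]
      refine Finset.sum_congr rfl fun x _ => ?_
      by_cases h : m < (kc x : ℝ)
      · simp only [if_pos h]; exact sum_jointXY_y q x
      · simp only [if_neg h, Finset.sum_const_zero]
    rw [Finset.sum_sub_distrib, hPsum] at h2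
    linarith
  have htail_le : tail ≤ ε ^ 2 / 2 := by
    rcases Nat.eq_zero_or_pos n with hn | hn
    · have hzero : tail = 0 := by
        rw [htail]
        refine Finset.sum_eq_zero fun x _ => ?_
        rw [if_neg]
        subst hn
        have : kc x = 0 := by simp [kc]
        rw [this]
        push_cast
        linarith
      rw [hzero]; positivity
    · have hn' : (0:ℝ) < n := by exact_mod_cast hn
      set l : ℝ := 4 * t / n with hl
      have hl0 : 0 ≤ l := by positivity
      have hub := chernoff_tail (n := n) q hq0 p hsome hqnone l m hl0
      have hub2 : (1 - p + p * Real.exp l) ^ n ≤ Real.exp ((n : ℝ) * (p * l + l ^ 2 / 8)) := by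
        calc (1 - p + p * Real.exp l) ^ n
            ≤ (Real.exp (p * l + l ^ 2 / 8)) ^ n :=
              pow_le_pow_left₀ (le_of_lt (den_pos hp0 hl0)) (hoeffding_scalar hp0 hp1 hl0) n
          _ = Real.exp ((n : ℝ) * (p * l + l ^ 2 / 8)) := by
              rw [← Real.exp_nat_mul]
      have hexp : -(l * m) + (n : ℝ) * (p * l + l ^ 2 / 8) = -2 * t ^ 2 / n := by
        rw [hm, hl]; field_simp; ring
      have hmain : tail ≤ Real.exp (-2 * t ^ 2 / n) := by
        calc tail ≤ Real.exp (-(l * m)) * (1 - p + p * Real.exp l) ^ n := hub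
          _ ≤ Real.exp (-(l * m)) * Real.exp ((n : ℝ) * (p * l + l ^ 2 / 8)) :=
              mul_le_mul_of_nonneg_left hub2 (Real.exp_pos _).le
          _ = Real.exp (-(l * m) + (n : ℝ) * (p * l + l ^ 2 / 8)) := (Real.exp_add _ _).symm
          _ = Real.exp (-2 * t ^ 2 / n) := by rw [hexp]
      refine le_trans hmain ?_
      rcases le_or_gt 0 (Real.log (2 / ε ^ 2)) with hlog | hlog
      · have ht2 : t ^ 2 = (n : ℝ) / 2 * Real.log (2 / ε ^ 2) :=
          Real.sq_sqrt (mul_nonneg (by positivity) hlog)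
        have heq : -2 * t ^ 2 / n = -Real.log (2 / ε ^ 2) := by
          rw [ht2]; field_simp
        rw [heq, Real.exp_neg, Real.exp_log (by positivity), inv_div]
      · have h1' : (2:ℝ) / ε ^ 2 < 1 := by
          by_contra h'
          push_neg at h'
          exact absurd (Real.log_nonneg h') (not_le.2 hlog)
        have hε2 : 2 < ε ^ 2 := by
          rw [div_lt_one (by positivity)] at h1'; linarith
        have hle1 : Real.exp (-2 * t ^ 2 / n) ≤ 1 := by
          rw [← Real.exp_zero]
          apply Real.exp_le_exp.2
          apply div_nonpos_of_nonpos_of_nonneg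
          · nlinarith [sq_nonneg t]
          · positivity
        linarith
  have hsub : SubDist P' := ⟨hP'0, hP'sum_le⟩
  have hdist : cPurifiedDist P' P ≤ ε := by
    unfold cPurifiedDist cGenFidelity
    have h1 : ∀ tt, Real.sqrt (P' tt * P tt) = P' tt := by
      intro tt; rw [hP']; dsimp only; split
      · exact Real.sqrt_mul_self (hP0 tt)
      · rw [zero_mul, Real.sqrt_zero]
    rw [Finset.sum_congr rfl fun tt _ => h1 tt, hPsum, sub_self, mul_zero, Real.sqrt_zero,
      add_zero, hsplit]
    have h2 : 1 - (1 - tail) ^ 2 ≤ ε ^ 2 := by nlinarith [sq_nonneg tail]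
    calc Real.sqrt (1 - (1 - tail) ^ 2) ≤ Real.sqrt (ε ^ 2) := Real.sqrt_le_sqrt h2
      _ = ε := Real.sqrt_sq hε.le
  -- the max-entropy bound
  set D : ℝ := d ^ m with hD
  have hDpos : 0 < D := Real.rpow_pos_of_pos (by linarith) m
  have hF0 : ∀ (x : Fin n → Option X) (y : Fin n → Bool), P' (x, y) =
      if (((Finset.univ.filter fun i => y i = true).card : ℝ) ≤ m ∧ ∀ i, y i = (x i).isSome)
        then ∏ i, q (x i) else 0 := by
    intro x y
    by_cases hxy : ∀ i, y i = (x i).isSome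
    · have hk : (kc x : ℝ) = ((Finset.univ.filter fun i => y i = true).card : ℝ) := by
        rw [kc_eq_weight hxy]
      rw [hP']; dsimp only; rw [hk, hP]
      unfold jointXY
      rw [if_pos hxy]
      by_cases hw : (((Finset.univ.filter fun i => y i = true).card : ℝ) ≤ m)
      · rw [if_pos hw, if_pos ⟨hw, hxy⟩]
      · rw [if_neg hw, if_neg (fun hc => hw hc.1)]
    · rw [hP']; dsimp only; rw [hP]
      unfold jointXY
      have hnc : ¬(((Finset.univ.filter fun i => y i = true).card : ℝ) ≤ m ∧
          ∀ i, y i = (x i).isSome) := fun hc => hxy hc.2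
      rw [if_neg hxy, if_neg hnc]
      split <;> rfl
  set w : (Fin n → Bool) → ℝ := fun y => ((Finset.univ.filter fun i => y i = true).card : ℝ)
    with hw
  set s1 : ℝ := ∑ v : X, Real.sqrt (q (some v)) with hs1
  set A : (Fin n → Bool) → ℝ := fun y =>
    if w y ≤ m then ∏ i, (if y i = true then s1 else Real.sqrt (q none)) else 0 with hA
  set B : (Fin n → Bool) → ℝ := fun y =>
    if w y ≤ m then ∏ i, (if y i = true then p else q none) else 0 with hB
  have hF1 : ∀ y, ∑ x, Real.sqrt (P' (x, y)) = A y := by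
    intro y
    have hsq : ∀ x : Fin n → Option X, Real.sqrt (P' (x, y)) =
        if (w y ≤ m ∧ ∀ i, y i = (x i).isSome) then ∏ i, Real.sqrt (q (x i)) else 0 := by
      intro x
      rw [hF0 x y]
      split
      · exact sqrt_prod' _ _ fun i _ => hq0 _
      · exact Real.sqrt_zero
    rw [Finset.sum_congr rfl fun x _ => hsq x, hA]
    exact sum_truncated y m (fun v => Real.sqrt (q v))
  have hF2 : ∀ y, ∑ x, P' (x, y) = B y := by
    intro y
    rw [Finset.sum_congr rfl fun x _ => hF0 x y, hB]
    rw [sum_truncated y m q, hsome]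
  have hB0 : ∀ y, 0 ≤ B y := by
    intro y
    rw [← hF2 y]
    exact Finset.sum_nonneg fun x _ => hP'0 _
  have hF3 : ∀ y, (A y) ^ 2 ≤ D * B y := by
    intro y
    by_cases hwy : w y ≤ m
    · rw [hA, hB]; dsimp only; rw [if_pos hwy, if_pos hwy]
      rw [← Finset.prod_pow]
      have hpt : ∀ i : Fin n, (if y i = true then s1 else Real.sqrt (q none)) ^ 2
          = (if y i = true then s1 ^ 2 else q none) := by
        intro i
        by_cases h : y i = true
        · rw [if_pos h, if_pos h]
        · rw [if_neg h, if_neg h, Real.sq_sqrt (hq0 none)]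
      rw [Finset.prod_congr rfl fun i _ => hpt i]
      have hs1sq : s1 ^ 2 ≤ (Fintype.card X : ℝ) * p := by
        rw [hs1, ← hsome]
        calc (∑ v : X, Real.sqrt (q (some v))) ^ 2
            ≤ (Finset.univ.card : ℝ) * ∑ v : X, Real.sqrt (q (some v)) ^ 2 :=
              sq_sum_le_card_mul_sum_sq
          _ = (Fintype.card X : ℝ) * ∑ v : X, q (some v) := by
              rw [Finset.card_univ,
                Finset.sum_congr rfl fun v _ => Real.sq_sqrt (hq0 (some v))]
      have hstep1 : ∏ i, (if y i = true then s1 ^ 2 else q none)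
          ≤ ∏ i, (if y i = true then (Fintype.card X : ℝ) * p else q none) := by
        refine Finset.prod_le_prod (fun i _ => ?_) (fun i _ => ?_)
        · split
          · exact sq_nonneg s1
          · exact hq0 none
        · split
          · exact hs1sq
          · exact le_refl _
      refine le_trans hstep1 ?_
      have hsplit2 : ∀ i : Fin n, (if y i = true then (Fintype.card X : ℝ) * p else q none)
          = (if y i = true then (Fintype.card X : ℝ) else 1) * (if y i = true then p else q none) := by
        intro i; by_cases h : y i = true <;> simp [h]
      rw [Finset.prod_congr rfl fun i _ => hsplit2 i, Finset.prod_mul_distrib]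
      have hcard : ∏ i, (if y i = true then (Fintype.card X : ℝ) else 1) ≤ D := by
        rw [← Finset.prod_filter]
        rw [Finset.prod_const]
        calc (Fintype.card X : ℝ) ^ (Finset.univ.filter fun i => y i = true).card
            ≤ d ^ (Finset.univ.filter fun i => y i = true).card := by
              apply pow_le_pow_left₀ (Nat.cast_nonneg _)
              rw [hd]; linarith
          _ = d ^ (w y) := by rw [hw, Real.rpow_natCast]
          _ ≤ d ^ m := Real.rpow_le_rpow_of_exponent_le hd1 hwy
      apply mul_le_mul_of_nonneg_right hcard
      exact Finset.prod_nonneg fun i _ => by split; exacts [hp0, hq0 none]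
    · rw [hA, hB]; dsimp only; rw [if_neg hwy, if_neg hwy]
      simp
  have hHmax : cHmax P' ≤ m * L := by
    unfold cHmax
    apply Real.sSup_le _ (mul_nonneg hm0 hL0)
    rintro h ⟨σ, hσ0, hσ1, rfl⟩
    have h5 : (∑ x, ∑ y, Real.sqrt (P' (x, y) * σ y)) = ∑ y, A y * Real.sqrt (σ y) := by
      rw [Finset.sum_comm]
      refine Finset.sum_congr rfl fun y _ => ?_
      calc ∑ x, Real.sqrt (P' (x, y) * σ y)
          = ∑ x, Real.sqrt (P' (x, y)) * Real.sqrt (σ y) :=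
            Finset.sum_congr rfl fun x _ => Real.sqrt_mul (hP'0 _) _
        _ = (∑ x, Real.sqrt (P' (x, y))) * Real.sqrt (σ y) := (Finset.sum_mul _ _ _).symm
        _ = A y * Real.sqrt (σ y) := by rw [hF1 y]
    have h6 : (∑ x, ∑ y, Real.sqrt (P' (x, y) * σ y)) ^ 2 ≤ D := by
      rw [h5]
      calc (∑ y, A y * Real.sqrt (σ y)) ^ 2
          ≤ (∑ y, A y ^ 2) * (∑ y, Real.sqrt (σ y) ^ 2) :=
            Finset.sum_mul_sq_le_sq_mul_sq _ _ _
        _ ≤ D * 1 := by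
            apply mul_le_mul
            · calc ∑ y, A y ^ 2 ≤ ∑ y, D * B y := Finset.sum_le_sum fun y _ => hF3 y
                _ = D * ∑ y, B y := by rw [Finset.mul_sum]
                _ ≤ D * 1 := by
                    apply mul_le_mul_of_nonneg_left _ hDpos.le
                    calc ∑ y, B y = ∑ y, ∑ x, P' (x, y) :=
                          Finset.sum_congr rfl fun y _ => (hF2 y).symm
                      _ = ∑ tt, P' tt := by rw [Fintype.sum_prod_type, Finset.sum_comm]
                      _ ≤ 1 := hP'sum_le
                _ = D := mul_one D
            · calc ∑ y, Real.sqrt (σ y) ^ 2 = ∑ y, σ y :=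
                    Finset.sum_congr rfl fun y _ => Real.sq_sqrt (hσ0 y)
                _ ≤ 1 := hσ1
            · exact Finset.sum_nonneg fun y _ => sq_nonneg _
            · exact hDpos.le
        _ = D := mul_one D
    rcases eq_or_lt_of_le (sq_nonneg (∑ x, ∑ y, Real.sqrt (P' (x, y) * σ y))) with hS | hS
    · rw [← hS, Real.logb_zero]
      exact mul_nonneg hm0 hL0
    · calc Real.logb 2 ((∑ x, ∑ y, Real.sqrt (P' (x, y) * σ y)) ^ 2)
          ≤ Real.logb 2 D := Real.logb_le_logb_of_le one_lt_two hS h6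
        _ = m * L := by
            rw [hD, hL]
            exact Real.logb_rpow_eq_mul_logb_of_pos (by linarith)
  -- conclude
  have hmem : cHmax P' ∈
      {h : ℝ | ∃ Pb : ((Fin n → Option X) × (Fin n → Bool)) → ℝ,
        SubDist Pb ∧ cPurifiedDist Pb P ≤ ε ∧ h = cHmax Pb} :=
    ⟨P', hsub, hdist, rfl⟩
  have hlb : ∀ h ∈ {h : ℝ | ∃ Pb : ((Fin n → Option X) × (Fin n → Bool)) → ℝ,
      SubDist Pb ∧ cPurifiedDist Pb P ≤ ε ∧ h = cHmax Pb}, (0:ℝ) ≤ h := by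
    rintro h ⟨Pb, _, _, rfl⟩
    unfold cHmax
    have h0mem : (0:ℝ) ∈ {h : ℝ | ∃ σ : (Fin n → Bool) → ℝ, (∀ y, 0 ≤ σ y) ∧ (∑ y, σ y) ≤ 1 ∧
        h = Real.logb 2 ((∑ x : Fin n → Option X, ∑ y : Fin n → Bool,
          Real.sqrt (Pb (x, y) * σ y)) ^ 2)} :=
      ⟨fun _ => 0, fun y => le_refl 0, by simp, by simp⟩
    by_cases hbdd : BddAbove {h : ℝ | ∃ σ : (Fin n → Bool) → ℝ, (∀ y, 0 ≤ σ y) ∧ (∑ y, σ y) ≤ 1 ∧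
        h = Real.logb 2 ((∑ x : Fin n → Option X, ∑ y : Fin n → Bool,
          Real.sqrt (Pb (x, y) * σ y)) ^ 2)}
    · exact le_csSup hbdd h0mem
    · rw [Real.sSup_of_not_bddAbove hbdd]
  have hfinal : cHmaxSmooth ε P ≤ cHmax P' := csInf_le ⟨0, hlb⟩ hmem
  have : m * L = (n : ℝ) * p * L + t * L := by rw [hm]; ring
  calc cHmaxSmooth ε (jointXY n q) = cHmaxSmooth ε P := by rw [hP]
    _ ≤ cHmax P' := hfinal
    _ ≤ m * L := hHmax
    _ = (n : ℝ) * p * L + t * L := this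


end
end

section
/- Let g: 𝒫_C̃ → ℝ be a crossover min-tradeoff function on distributions over a finite alphabet C̃, and define f on distributions over C = C̃ ∪ {⊥} by f(δ_c) = max(g) + (1/(1−p_key))(g(δ_c) − max(g)) for c ∈ C̃ and f(δ_⊥) = max(g), extended affinely. Then if p is of the form p(c) = (1−p_key)·p̃(c) for c ∈ C̃ and p(⊥) = p_key, it holds f(p) = g(p̃); moreover max(f) = max(g), and the variance of f (as a random variable f(δ_C) under any distribution over C of this form) satisfies 0 ≤ Var(f) ≤ (1/(1−p_key))·(max(g) − min(g))². -/
open Finset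

noncomputable section

/-- A probability distribution on a finite alphabet. -/
def IsDist {C : Type*} [Fintype C] (p : C → ℝ) : Prop :=
  (∀ c, 0 ≤ p c) ∧ ∑ c, p c = 1

/-- The point (deterministic) distribution at `c`. -/
def pointDist {C : Type*} [DecidableEq C] (c : C) : C → ℝ := fun c' => if c' = c then 1 else 0

variable {C' : Type*} [Fintype C'] [DecidableEq C'] [Nonempty C']

/-- Maximum of an affine function over the probability simplex (attained at vertices). -/
noncomputable def maxg (g : (C' → ℝ) → ℝ) : ℝ :=
  Finset.univ.sup' Finset.univ_nonempty (fun c => g (pointDist c))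

/-- Minimum of an affine function over the probability simplex (attained at vertices). -/
noncomputable def ming (g : (C' → ℝ) → ℝ) : ℝ :=
  Finset.univ.inf' Finset.univ_nonempty (fun c => g (pointDist c))

/-- Value of the induced min-tradeoff function `f` on the point distribution at
`c : Option C'` (`none` plays the role of `⊥`). -/
noncomputable def fPoint (g : (C' → ℝ) → ℝ) (pkey : ℝ) : Option C' → ℝ
  | none => maxg g
  | some c => maxg g + (1 / (1 - pkey)) * (g (pointDist c) - maxg g)

/-- The affine extension of `fPoint` to distributions on `Option C'`. -/
noncomputable def fAff (g : (C' → ℝ) → ℝ) (pkey : ℝ) (p : Option C' → ℝ) : ℝ :=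
  ∑ c : Option C', p c * fPoint g pkey c

/-- Variance of `f` as a random variable `f(δ_C)` under a distribution `q` on `Option C'`. -/
noncomputable def varf (g : (C' → ℝ) → ℝ) (pkey : ℝ) (q : Option C' → ℝ) : ℝ :=
  (∑ c : Option C', q c * (fPoint g pkey c) ^ 2) -
    (∑ c : Option C', q c * fPoint g pkey c) ^ 2

lemma sum_shift_aux {α : Type*} [Fintype α] (q X : α → ℝ) (hq : ∑ c, q c = 1) (a : ℝ) :
    ∑ c, q c * (X c - a) ^ 2
      = (∑ c, q c * (X c) ^ 2) - 2 * a * (∑ c, q c * X c) + a ^ 2 := by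
  have h : ∀ c ∈ Finset.univ, q c * (X c - a) ^ 2
      = q c * (X c) ^ 2 - (2 * a) * (q c * X c) + a ^ 2 * q c := fun c _ => by ring
  rw [Finset.sum_congr rfl h, Finset.sum_add_distrib, Finset.sum_sub_distrib,
    ← Finset.mul_sum, ← Finset.mul_sum, hq]
  ring

/-- Conversion of a crossover min-tradeoff function `g` into a min-tradeoff function `f`:
on distributions of the form `p(c) = (1−p_key)pt(c)` for `c ∈ C̃`, `p(⊥) = p_key`,
one has `f(p) = g(pt)`; moreover `max f = max g` and
`0 ≤ Var(f) ≤ (1/(1−p_key))(max g − min g)²`. -/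
theorem crossover_to_min_tradeoff
    (g : (C' → ℝ) → ℝ) (G₀ : ℝ) (ν : C' → ℝ)
    (hgaff : ∀ p : C' → ℝ, g p = G₀ + ∑ c, ν c * p c)
    (pkey : ℝ) (hpkey0 : 0 ≤ pkey) (hpkey1 : pkey < 1) :
    (∀ pt : C' → ℝ, IsDist pt →
      fAff g pkey (fun c => Option.casesOn c pkey (fun c' => (1 - pkey) * pt c')) = g pt) ∧
    (∀ q : Option C' → ℝ, IsDist q → fAff g pkey q ≤ maxg g) ∧
    fAff g pkey (pointDist none) = maxg g ∧
    (∀ pt : C' → ℝ, IsDist pt →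
      0 ≤ varf g pkey (fun c => Option.casesOn c pkey (fun c' => (1 - pkey) * pt c')) ∧
      varf g pkey (fun c => Option.casesOn c pkey (fun c' => (1 - pkey) * pt c')) ≤
        (1 / (1 - pkey)) * (maxg g - ming g) ^ 2) := by
  have h1 : (0 : ℝ) < 1 - pkey := by linarith
  set M := maxg g with hMdef
  set m := ming g with hmdef
  have hgd : ∀ c : C', g (pointDist c) = G₀ + ν c := by
    intro c
    rw [hgaff]
    congr 1
    simp [pointDist, mul_ite]
  have hle : ∀ c : C', g (pointDist c) ≤ M := by
    intro c
    rw [hMdef]; unfold maxg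
    exact Finset.le_sup' (fun c => g (pointDist c)) (mem_univ c)
  have hge : ∀ c : C', m ≤ g (pointDist c) := by
    intro c
    rw [hmdef]; unfold ming
    exact Finset.inf'_le (fun c => g (pointDist c)) (mem_univ c)
  have hmM : m ≤ M := by
    obtain ⟨c0⟩ := ‹Nonempty C'›
    exact (hge c0).trans (hle c0)
  have hk0 : (0 : ℝ) ≤ 1 / (1 - pkey) := by positivity
  -- part 1
  have part1 : ∀ pt : C' → ℝ, IsDist pt →
      fAff g pkey (fun c => Option.casesOn c pkey (fun c' => (1 - pkey) * pt c')) = g pt := by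
    intro pt hpt
    unfold fAff
    rw [Fintype.sum_option]
    simp only [fPoint]
    have key : ∀ c ∈ Finset.univ, (1 - pkey) * pt c *
        (M + (1 / (1 - pkey)) * (g (pointDist c) - M))
        = (M * pt c - pkey * (M * pt c)) + (pt c * g (pointDist c) - pt c * M) := by
      intro c _
      field_simp
    rw [Finset.sum_congr rfl key, Finset.sum_add_distrib, Finset.sum_sub_distrib,
      Finset.sum_sub_distrib]
    have h2 : ∑ c, M * pt c = M := by rw [← Finset.mul_sum, hpt.2, mul_one]
    have h3 : ∑ c, pkey * (M * pt c) = pkey * M := by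
      rw [← Finset.mul_sum, ← Finset.mul_sum, hpt.2, mul_one]
    have h4 : ∑ c, pt c * M = M := by rw [← Finset.sum_mul, hpt.2, one_mul]
    have h5 : ∑ c, pt c * g (pointDist c) = g pt := by
      rw [hgaff pt]
      have : ∀ c ∈ Finset.univ, pt c * g (pointDist c) = G₀ * pt c + ν c * pt c := by
        intro c _; rw [hgd c]; ring
      rw [Finset.sum_congr rfl this, Finset.sum_add_distrib, ← Finset.mul_sum, hpt.2, mul_one]
    rw [h2, h3, h4, h5]
    ring
  -- part 2
  have part2 : ∀ q : Option C' → ℝ, IsDist q → fAff g pkey q ≤ M := by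
    intro q hq
    unfold fAff
    calc ∑ c : Option C', q c * fPoint g pkey c ≤ ∑ c : Option C', q c * M := by
          apply Finset.sum_le_sum
          intro c _
          apply mul_le_mul_of_nonneg_left _ (hq.1 c)
          match c with
          | none => simp [fPoint, hMdef]
          | some c' =>
            simp only [fPoint]
            nlinarith [hle c', mul_nonneg hk0 (sub_nonneg.2 (hle c'))]
      _ = M := by rw [← Finset.sum_mul, hq.2, one_mul]
  -- part 3
  have part3 : fAff g pkey (pointDist none) = M := by
    unfold fAff
    rw [Fintype.sum_option]
    simp [pointDist, fPoint, hMdef]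
  refine ⟨part1, part2, part3, ?_⟩
  -- part 4
  intro pt hpt
  set q : Option C' → ℝ := fun c => Option.casesOn c pkey (fun c' => (1 - pkey) * pt c')
    with hqdef
  have hq1 : ∑ c : Option C', q c = 1 := by
    rw [Fintype.sum_option]
    simp only [hqdef]
    rw [← Finset.mul_sum, hpt.2, mul_one]
    ring
  have hq0 : ∀ c, 0 ≤ q c := by
    intro c
    match c with
    | none => exact hpkey0
    | some c' => exact mul_nonneg h1.le (hpt.1 c')
  set X := fPoint g pkey with hX
  set μ := ∑ c : Option C', q c * X c with hμ
  have hvar : varf g pkey q = ∑ c : Option C', q c * (X c - μ) ^ 2 := by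
    rw [varf, sum_shift_aux q X hq1 μ, ← hμ]
    ring
  constructor
  · rw [hvar]
    exact Finset.sum_nonneg fun c _ => mul_nonneg (hq0 c) (sq_nonneg _)
  · have hvarM : varf g pkey q = (∑ c : Option C', q c * (X c - M) ^ 2) - (μ - M) ^ 2 := by
      rw [varf, sum_shift_aux q X hq1 M, ← hμ]
      ring
    have hbound : ∑ c : Option C', q c * (X c - M) ^ 2 ≤ (1 / (1 - pkey)) * (M - m) ^ 2 := by
      rw [Fintype.sum_option]
      have hnone : q none * (X none - M) ^ 2 = 0 := by simp [hqdef, hX, fPoint, hMdef]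
      rw [hnone, zero_add]
      have hterm : ∀ c ∈ Finset.univ, q (some c) * (X (some c) - M) ^ 2
          ≤ pt c * ((1 / (1 - pkey)) * (M - m) ^ 2) := by
        intro c _
        have hXc : X (some c) - M = (1 / (1 - pkey)) * (g (pointDist c) - M) := by
          simp [hX, fPoint, hMdef]
        rw [hXc, hqdef]
        have hsq : (g (pointDist c) - M) ^ 2 ≤ (M - m) ^ 2 := by
          apply sq_le_sq'
          · nlinarith [hge c]
          · nlinarith [hle c, hmM]
        have hrw : (1 - pkey) * pt c * ((1 / (1 - pkey)) * (g (pointDist c) - M)) ^ 2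
            = pt c * ((1 / (1 - pkey)) * (g (pointDist c) - M) ^ 2) := by
          field_simp
        rw [hrw]
        apply mul_le_mul_of_nonneg_left _ (hpt.1 c)
        exact mul_le_mul_of_nonneg_left hsq hk0
      calc ∑ c, q (some c) * (X (some c) - M) ^ 2
          ≤ ∑ c, pt c * ((1 / (1 - pkey)) * (M - m) ^ 2) := Finset.sum_le_sum hterm
        _ = (1 / (1 - pkey)) * (M - m) ^ 2 := by rw [← Finset.sum_mul, hpt.2, one_mul]
    rw [hvarM]
    nlinarith [sq_nonneg (μ - M)]

end
end

section
/- Multinomial concentration for affine statistics: let c₁,...,cₙ be i.i.d. samples from a distribution π on a finite alphabet of size K+1, let π̂ be the empirical frequency distribution, and let h ∈ ℝ^{K+1} be a fixed coefficient vector. Then for any ε ∈ (0,1), with probability at least 1 − ε, |(π̂ − π)ᵀh| ≤ 2√(log(n/ε) · Σ_{i=1}^{K} γᵢcᵢ²/n) + (3D/n)·log(2/ε), where γᵢ = πᵢ(1 − Σ_{j≤i}πⱼ)/(1 − Σ_{j<i}πⱼ), cᵢ = hᵢ − (Σ_{j>i} hⱼπⱼ)/(1 − Σ_{j≤i}πⱼ),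 and D = max_{i,j}|hᵢ − hⱼ|. -/
open Finset

noncomputable section

open scoped Classical in
/-- Probability of an event for `n` i.i.d. samples from a distribution `π` on a finite
alphabet. -/
noncomputable def iidPr {K n : ℕ} (π : Fin (K + 1) → ℝ)
    (A : (Fin n → Fin (K + 1)) → Prop) : ℝ :=
  ∑ ω ∈ Finset.univ.filter (fun ω => A ω), ∏ i, π (ω i)

/-- Empirical frequency of symbol `c` among the samples `ω`. -/
noncomputable def freq {K n : ℕ} (ω : Fin n → Fin (K + 1)) (c : Fin (K + 1)) : ℝ :=
  (Finset.univ.filter (fun j => ω j = c)).card / (n : ℝ)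

/-- `γᵢ = πᵢ(1 − Σ_{j≤i}πⱼ)/(1 − Σ_{j<i}πⱼ)`. -/
noncomputable def gammaCoef {K : ℕ} (π : Fin (K + 1) → ℝ) (i : Fin K) : ℝ :=
  π i.castSucc * (1 - ∑ j ∈ Finset.univ.filter (fun j => j ≤ i.castSucc), π j) /
    (1 - ∑ j ∈ Finset.univ.filter (fun j => j < i.castSucc), π j)

/-- `cᵢ = hᵢ − (Σ_{j>i} hⱼπⱼ)/(1 − Σ_{j≤i}πⱼ)`. -/
noncomputable def cCoef {K : ℕ} (π h : Fin (K + 1) → ℝ) (i : Fin K) : ℝ :=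
  h i.castSucc - (∑ j ∈ Finset.univ.filter (fun j => i.castSucc < j), h j * π j) /
    (1 - ∑ j ∈ Finset.univ.filter (fun j => j ≤ i.castSucc), π j)

/-- `D = max_{i,j}|hᵢ − hⱼ|`. -/
noncomputable def Dspread {K : ℕ} (h : Fin (K + 1) → ℝ) : ℝ :=
  Finset.univ.sup' Finset.univ_nonempty
    (fun p : Fin (K + 1) × Fin (K + 1) => |h p.1 - h p.2|)


lemma exp_quad_neg {x : ℝ} (hx : x ≤ 0) : Real.exp x ≤ 1 + x + x^2/2 := by
  have hA : Antitone (fun x : ℝ => 1 + x + x^2/2 - Real.exp x) := by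
    apply antitone_of_deriv_nonpos
    · fun_prop
    · intro y
      have h : HasDerivAt (fun x : ℝ => 1 + x + x^2/2 - Real.exp x)
          (0 + 1 + (↑2*y^(2-1))/2 - Real.exp y) y :=
        (((hasDerivAt_const y (1:ℝ)).add (hasDerivAt_id y)).add
          ((hasDerivAt_pow 2 y).div_const 2)).sub (Real.hasDerivAt_exp y)
      have h' : HasDerivAt (fun x : ℝ => 1 + x + x^2/2 - Real.exp x) (1 + y - Real.exp y) y := by
        convert h using 1; norm_num
      rw [h'.deriv]
      have := Real.add_one_le_exp y
      linarith
  have h := hA hx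
  norm_num at h
  linarith

lemma exp_quad_pos {x : ℝ} (hx : 0 ≤ x) : Real.exp x - 1 - x ≤ x^2 * Real.exp x / 2 := by
  have hM : Monotone (fun x : ℝ => x^2/2 - 1 + Real.exp (-x) + x * Real.exp (-x)) := by
    apply monotone_of_deriv_nonneg
    · fun_prop
    · intro y
      have h1 : HasDerivAt (fun x : ℝ => Real.exp (-x)) (-Real.exp (-y)) y := by
        simpa [Function.comp_def] using (Real.hasDerivAt_exp (-y)).comp y (hasDerivAt_neg y)
      have h2 : HasDerivAt (fun x : ℝ => x * Real.exp (-x))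
          (1 * Real.exp (-y) + y * -Real.exp (-y)) y := (hasDerivAt_id y).mul h1
      have h3 : HasDerivAt (fun x : ℝ => x^2/2 - 1 + Real.exp (-x) + x * Real.exp (-x))
          ((↑2*y^(2-1))/2 - 0 + -Real.exp (-y) + (1 * Real.exp (-y) + y * -Real.exp (-y))) y :=
        ((((hasDerivAt_pow 2 y).div_const 2).sub (hasDerivAt_const y 1)).add h1).add h2
      have h4 : HasDerivAt (fun x : ℝ => x^2/2 - 1 + Real.exp (-x) + x * Real.exp (-x))
          (y * (1 - Real.exp (-y))) y := by
        convert h3 using 1; norm_num; ring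
      rw [h4.deriv]
      rcases le_or_gt 0 y with hy | hy
      · have h5 : Real.exp (-y) ≤ 1 := Real.exp_le_one_iff.mpr (by linarith)
        nlinarith
      · have h5 : 1 ≤ Real.exp (-y) := Real.one_le_exp_iff.mpr (by linarith)
        nlinarith
  have h0 := hM hx
  norm_num [Real.exp_neg] at h0
  have hp := Real.exp_pos x
  have h0' : 0 ≤ x ^ 2 / 2 - 1 + (Real.exp x)⁻¹ + x * (Real.exp x)⁻¹ := by linarith
  have hh := mul_le_mul_of_nonneg_right h0' hp.le
  have hinv : (Real.exp x)⁻¹ * Real.exp x = 1 := inv_mul_cancel₀ hp.ne'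
  nlinarith

lemma exp_quad {x y : ℝ} (hxy : x ≤ y) (hy : 0 ≤ y) :
    Real.exp x ≤ 1 + x + x^2 * Real.exp y / 2 := by
  have hey : 1 ≤ Real.exp y := Real.one_le_exp_iff.mpr hy
  rcases le_or_gt x 0 with hx | hx
  · have := exp_quad_neg hx
    nlinarith [sq_nonneg x]
  · have h1 := exp_quad_pos hx.le
    have h2 : Real.exp x ≤ Real.exp y := Real.exp_le_exp.mpr hxy
    nlinarith [sq_nonneg x]

open scoped Classical

variable {K n : ℕ} {π : Fin (K + 1) → ℝ}

lemma prod_pi_nonneg (hπ0 : ∀ i, 0 ≤ π i) (ω : Fin n → Fin (K + 1)) :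
    0 ≤ ∏ i, π (ω i) := Finset.prod_nonneg (fun _ _ => hπ0 _)

lemma iidPr_nonneg (hπ0 : ∀ i, 0 ≤ π i) (A : (Fin n → Fin (K + 1)) → Prop) :
    0 ≤ iidPr π A :=
  Finset.sum_nonneg fun ω _ => prod_pi_nonneg hπ0 ω

lemma sum_prod_pi (hπ1 : ∑ i, π i = 1) :
    ∑ ω : Fin n → Fin (K + 1), ∏ i, π (ω i) = 1 := by
  rw [← Fintype.piFinset_univ, ← Finset.prod_univ_sum]
  simp [hπ1]

lemma iidPr_add_compl (hπ1 : ∑ i, π i = 1) (A : (Fin n → Fin (K + 1)) → Prop) :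
    iidPr π A + iidPr π (fun ω => ¬ A ω) = 1 := by
  unfold iidPr
  rw [Finset.sum_filter, Finset.sum_filter, ← Finset.sum_add_distrib,
    ← sum_prod_pi (n := n) hπ1]
  apply Finset.sum_congr rfl
  intro ω _
  by_cases hA : A ω <;> simp [hA]

lemma iidPr_mono (hπ0 : ∀ i, 0 ≤ π i) {A B : (Fin n → Fin (K + 1)) → Prop}
    (hAB : ∀ ω, A ω → B ω) : iidPr π A ≤ iidPr π B := by
  unfold iidPr
  apply Finset.sum_le_sum_of_subset_of_nonneg
  · exact Finset.monotone_filter_right _ (fun ω _ hω => hAB ω hω)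
  · intro ω _ _; exact prod_pi_nonneg hπ0 ω

lemma iidPr_union (hπ0 : ∀ i, 0 ≤ π i) {A B : (Fin n → Fin (K + 1)) → Prop} :
    iidPr π (fun ω => A ω ∨ B ω) ≤ iidPr π A + iidPr π B := by
  unfold iidPr
  have h : (∑ ω ∈ (Finset.univ.filter (fun ω : Fin n → Fin (K+1) => A ω) ∪
        Finset.univ.filter (fun ω => B ω)), ∏ i, π (ω i)) +
      ∑ ω ∈ (Finset.univ.filter (fun ω : Fin n → Fin (K+1) => A ω) ∩
        Finset.univ.filter (fun ω => B ω)), ∏ i, π (ω i) =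
      (∑ ω ∈ Finset.univ.filter (fun ω : Fin n → Fin (K+1) => A ω), ∏ i, π (ω i)) +
      ∑ ω ∈ Finset.univ.filter (fun ω : Fin n → Fin (K+1) => B ω), ∏ i, π (ω i) :=
    Finset.sum_union_inter
  have h2 : 0 ≤ ∑ ω ∈ (Finset.univ.filter (fun ω : Fin n → Fin (K+1) => A ω) ∩
      Finset.univ.filter (fun ω => B ω)), ∏ i, π (ω i) :=
    Finset.sum_nonneg fun ω _ => prod_pi_nonneg hπ0 ω
  have h4 : (∑ ω ∈ (Finset.univ.filter (fun ω : Fin n → Fin (K+1) => A ω) ∪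
        Finset.univ.filter (fun ω => B ω)), ∏ i, π (ω i)) ≤
      (∑ ω ∈ Finset.univ.filter (fun ω : Fin n → Fin (K+1) => A ω), ∏ i, π (ω i)) +
      ∑ ω ∈ Finset.univ.filter (fun ω : Fin n → Fin (K+1) => B ω), ∏ i, π (ω i) := by
    linarith
  refine le_trans ?_ h4
  apply Finset.sum_le_sum_of_subset_of_nonneg
  · intro ω hω
    simp only [Finset.mem_filter, Finset.mem_union] at *
    tauto
  · intro ω _ _; exact prod_pi_nonneg hπ0 ω

lemma chernoff (hπ0 : ∀ i, 0 ≤ π i) (g : Fin (K + 1) → ℝ) (l a : ℝ) (hl : 0 ≤ l) :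
    iidPr (n := n) π (fun ω => a < ∑ j, g (ω j)) ≤
      Real.exp (-(l * a)) * (∑ c, π c * Real.exp (l * g c)) ^ n := by
  unfold iidPr
  have key : ∀ ω ∈ Finset.univ.filter (fun ω : Fin n → Fin (K+1) => a < ∑ j, g (ω j)),
      ∏ i, π (ω i) ≤ Real.exp (-(l * a)) * ∏ i, (π (ω i) * Real.exp (l * g (ω i))) := by
    intro ω hω
    rw [Finset.mem_filter] at hω
    have h1 : ∏ i, (π (ω i) * Real.exp (l * g (ω i)))
        = (∏ i, π (ω i)) * Real.exp (l * ∑ j, g (ω j)) := by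
      rw [Finset.prod_mul_distrib, ← Real.exp_sum]
      congr 1
      rw [← Finset.mul_sum]
    rw [h1, ← mul_assoc, mul_comm (Real.exp _), mul_assoc, ← Real.exp_add]
    nth_rewrite 1 [← mul_one (∏ i, π (ω i))]
    apply mul_le_mul_of_nonneg_left _ (prod_pi_nonneg hπ0 ω)
    apply Real.one_le_exp_iff.mpr
    nlinarith [hω.2]
  calc ∑ ω ∈ Finset.univ.filter (fun ω : Fin n → Fin (K+1) => a < ∑ j, g (ω j)), ∏ i, π (ω i)
      ≤ ∑ ω ∈ Finset.univ.filter (fun ω : Fin n → Fin (K+1) => a < ∑ j, g (ω j)),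
        Real.exp (-(l * a)) * ∏ i, (π (ω i) * Real.exp (l * g (ω i))) :=
        Finset.sum_le_sum key
    _ ≤ ∑ ω : Fin n → Fin (K+1),
        Real.exp (-(l * a)) * ∏ i, (π (ω i) * Real.exp (l * g (ω i))) := by
        apply Finset.sum_le_sum_of_subset_of_nonneg (Finset.filter_subset _ _)
        intro ω _ _
        exact mul_nonneg (Real.exp_pos _).le
          (Finset.prod_nonneg fun i _ => mul_nonneg (hπ0 _) (Real.exp_pos _).le)
    _ = Real.exp (-(l * a)) * ∑ ω : Fin n → Fin (K+1), ∏ i, (π (ω i) * Real.exp (l * g (ω i))) := by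
        rw [Finset.mul_sum]
    _ = Real.exp (-(l * a)) * (∑ c, π c * Real.exp (l * g c)) ^ n := by
        rw [show (∑ c, π c * Real.exp (l * g c)) ^ n
            = ∏ _i : Fin n, ∑ c, π c * Real.exp (l * g c) by simp [Finset.prod_const],
          Finset.prod_univ_sum, Fintype.piFinset_univ]

section VarId
variable {K : ℕ}

/-- tail filter -/
def tfil (K k : ℕ) : Finset (Fin (K + 1)) := Finset.univ.filter (fun j => k ≤ (j : ℕ))

lemma tfil_split {k : ℕ} (hk : k < K + 1) :
    tfil K k = insert ⟨k, hk⟩ (tfil K (k + 1)) := by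
  ext j
  simp only [tfil, Finset.mem_filter, Finset.mem_insert, Finset.mem_univ, true_and]
  constructor
  · intro hj
    rcases eq_or_lt_of_le hj with he | hlt
    · left; exact (Fin.ext he.symm)
    · right; omega
  · rintro (rfl | hj)
    · simp
    · omega

lemma mem_tfil_self {k : ℕ} (hk : k < K + 1) : (⟨k, hk⟩ : Fin (K + 1)) ∈ tfil K k := by
  simp [tfil]

lemma not_mem_tfil_succ {k : ℕ} (hk : k < K + 1) :
    (⟨k, hk⟩ : Fin (K + 1)) ∉ tfil K (k + 1) := by
  simp [tfil]

lemma tfil_zero : tfil K 0 = Finset.univ := by simp [tfil]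

lemma tfil_last : tfil K K = {Fin.last K} := by
  ext j
  simp only [tfil, Finset.mem_filter, Finset.mem_univ, true_and, Finset.mem_singleton]
  constructor
  · intro hj
    have := j.isLt
    exact Fin.ext (by rw [Fin.val_last]; omega)
  · rintro rfl; simp [Fin.last]

variable {π h : Fin (K + 1) → ℝ}

lemma tailP_nonneg (hπ0 : ∀ i, 0 ≤ π i) (k : ℕ) : 0 ≤ ∑ j ∈ tfil K k, π j :=
  Finset.sum_nonneg fun j _ => hπ0 j

-- complement identities
lemma tail_compl_le (hπ1 : ∑ i, π i = 1) (i : Fin K) :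
    1 - ∑ j ∈ Finset.univ.filter (fun j => j ≤ i.castSucc), π j
      = ∑ j ∈ tfil K ((i : ℕ) + 1), π j := by
  have hsplit := Finset.sum_filter_add_sum_filter_not Finset.univ
    (fun j : Fin (K + 1) => j ≤ i.castSucc) π
  rw [hπ1] at hsplit
  have : Finset.univ.filter (fun j : Fin (K + 1) => ¬ j ≤ i.castSucc) = tfil K ((i : ℕ) + 1) := by
    ext j
    simp only [tfil, Finset.mem_filter, Finset.mem_univ, true_and, not_le, Fin.lt_def,
      Fin.le_def, Fin.coe_castSucc]
    omega
  rw [this] at hsplit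
  linarith

lemma tail_compl_lt (hπ1 : ∑ i, π i = 1) (i : Fin K) :
    1 - ∑ j ∈ Finset.univ.filter (fun j => j < i.castSucc), π j
      = ∑ j ∈ tfil K (i : ℕ), π j := by
  have hsplit := Finset.sum_filter_add_sum_filter_not Finset.univ
    (fun j : Fin (K + 1) => j < i.castSucc) π
  rw [hπ1] at hsplit
  have : Finset.univ.filter (fun j : Fin (K + 1) => ¬ j < i.castSucc) = tfil K (i : ℕ) := by
    ext j
    simp only [tfil, Finset.mem_filter, Finset.mem_univ, true_and, not_lt, Fin.lt_def,
      Fin.le_def, Fin.coe_castSucc]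
  rw [this] at hsplit
  linarith

lemma gt_filter_eq (i : Fin K) :
    Finset.univ.filter (fun j : Fin (K + 1) => i.castSucc < j) = tfil K ((i : ℕ) + 1) := by
  ext j
  simp only [tfil, Finset.mem_filter, Finset.mem_univ, true_and, Fin.lt_def, Fin.coe_castSucc]
  omega

lemma gamma_c_var (hπ0 : ∀ i, 0 ≤ π i) (hπ1 : ∑ i, π i = 1) :
    ∑ i : Fin K, gammaCoef π i * cCoef π h i ^ 2
      = ∑ c, π c * (h c - ∑ j, π j * h j) ^ 2 := by
  set f : ℕ → ℝ := fun k =>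
    (∑ j ∈ tfil K k, π j * h j ^ 2) - (∑ j ∈ tfil K k, h j * π j) ^ 2 / ∑ j ∈ tfil K k, π j
    with hf
  have hstep : ∀ i : Fin K, gammaCoef π i * cCoef π h i ^ 2 = f (i : ℕ) - f ((i : ℕ) + 1) := by
    intro i
    have hik : (i : ℕ) < K + 1 := lt_of_lt_of_le i.isLt (Nat.le_succ K)
    have hcast : (⟨(i : ℕ), hik⟩ : Fin (K + 1)) = i.castSucc := rfl
    set a := π i.castSucc with ha
    set b := h i.castSucc with hb
    set R := ∑ j ∈ tfil K ((i : ℕ) + 1), π j with hR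
    set M := ∑ j ∈ tfil K ((i : ℕ) + 1), h j * π j with hM
    set Q := ∑ j ∈ tfil K ((i : ℕ) + 1), π j * h j ^ 2 with hQ
    have hPs : ∑ j ∈ tfil K (i : ℕ), π j = a + R := by
      rw [tfil_split hik, Finset.sum_insert (not_mem_tfil_succ hik), hcast]
    have hMs : ∑ j ∈ tfil K (i : ℕ), h j * π j = b * a + M := by
      rw [tfil_split hik, Finset.sum_insert (not_mem_tfil_succ hik), hcast]
    have hQs : ∑ j ∈ tfil K (i : ℕ), π j * h j ^ 2 = a * b ^ 2 + Q := by
      rw [tfil_split hik, Finset.sum_insert (not_mem_tfil_succ hik), hcast]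
    have hgamma : gammaCoef π i = a * R / (a + R) := by
      rw [gammaCoef, tail_compl_le hπ1 i, tail_compl_lt hπ1 i, hPs]
    have hc : cCoef π h i = b - M / R := by
      rw [cCoef, gt_filter_eq i, tail_compl_le hπ1 i]
    rw [hgamma, hc, hf]
    simp only []
    rw [hPs, hMs, hQs, ← hR, ← hM, ← hQ]
    have hRnn : 0 ≤ R := tailP_nonneg hπ0 _
    have hann : 0 ≤ a := hπ0 _
    rcases eq_or_lt_of_le hRnn with hR0 | hRpos
    · -- R = 0 : all π j = 0 for j in the tail
      have hz : ∀ j ∈ tfil K ((i : ℕ) + 1), π j = 0 := by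
        intro j hj
        have := (Finset.sum_eq_zero_iff_of_nonneg (fun j _ => hπ0 j)).mp hR0.symm
        exact this j hj
      have hM0 : M = 0 := Finset.sum_eq_zero fun j hj => by rw [hz j hj, mul_zero]
      have hQ0 : Q = 0 := Finset.sum_eq_zero fun j hj => by rw [hz j hj, zero_mul]
      rw [← hR0, hM0, hQ0]
      rcases eq_or_lt_of_le hann with ha0 | hapos
      · rw [← ha0]
        norm_num
      · field_simp
        ring
    · have haR : 0 < a + R := by linarith
      field_simp
      ring
  rw [Finset.sum_congr rfl (fun i _ => hstep i),
    Fin.sum_univ_eq_sum_range (fun k => f k - f (k + 1)) K,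
    Finset.sum_range_sub' f K]
  have hf0 : f 0 = (∑ j, π j * h j ^ 2) - (∑ j, π j * h j) ^ 2 := by
    rw [hf]
    simp only [tfil_zero]
    rw [hπ1]
    congr 1
    · rw [div_one]
      congr 1
      exact Finset.sum_congr rfl fun j _ => mul_comm _ _
  have hfK : f K = 0 := by
    rw [hf]
    simp only [tfil_last, Finset.sum_singleton]
    rcases eq_or_ne (π (Fin.last K)) 0 with hz | hz
    · simp [hz]
    · field_simp
      ring
  rw [hf0, hfK, sub_zero]
  have hexp : ∑ c, π c * (h c - ∑ j, π j * h j) ^ 2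
      = ∑ c, (π c * h c ^ 2 - (2 * ∑ j, π j * h j) * (π c * h c)
        + (∑ j, π j * h j) ^ 2 * π c) :=
    Finset.sum_congr rfl fun c _ => by ring
  rw [hexp, Finset.sum_add_distrib, Finset.sum_sub_distrib, ← Finset.mul_sum,
    ← Finset.mul_sum, hπ1]
  ring

end VarId

section Glue
variable {K n : ℕ}

lemma card_mul_sum (ω : Fin n → Fin (K + 1)) (F : Fin (K + 1) → ℝ) :
    ∑ c, ((Finset.univ.filter (fun j => ω j = c)).card : ℝ) * F c = ∑ j, F (ω j) := by
  rw [← Finset.sum_fiberwise Finset.univ ω (fun j => F (ω j))]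
  apply Finset.sum_congr rfl
  intro c _
  have hc : ∑ j ∈ Finset.univ.filter (fun j => ω j = c), F (ω j)
      = ∑ _j ∈ Finset.univ.filter (fun j => ω j = c), F c := by
    apply Finset.sum_congr rfl
    intro j hj
    rw [Finset.mem_filter] at hj
    rw [hj.2]
  rw [hc, Finset.sum_const, nsmul_eq_mul]

lemma freq_mul_sum (hn : 0 < n) (ω : Fin n → Fin (K + 1)) (F : Fin (K + 1) → ℝ) :
    (n : ℝ) * ∑ c, freq ω c * F c = ∑ j, F (ω j) := by
  have hn0 : ((n : ℝ)) ≠ 0 := by positivity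
  rw [← card_mul_sum ω F, Finset.mul_sum]
  apply Finset.sum_congr rfl
  intro c _
  rw [freq]
  field_simp

lemma freq_nonneg (ω : Fin n → Fin (K + 1)) (c : Fin (K + 1)) : 0 ≤ freq ω c := by
  rw [freq]; positivity

lemma freq_total (hn : 0 < n) (ω : Fin n → Fin (K + 1)) : ∑ c, freq ω c = 1 := by
  have h := freq_mul_sum hn ω (fun _ => (1 : ℝ))
  simp only [mul_one] at h
  simp only [Finset.sum_const, Finset.card_univ, Fintype.card_fin, nsmul_eq_mul, mul_one] at h
  have hn0 : ((n : ℝ)) ≠ 0 := by positivity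
  field_simp at h
  exact h

lemma Dspread_nonneg (h : Fin (K + 1) → ℝ) : 0 ≤ Dspread h := by
  have := Finset.le_sup' (f := fun p : Fin (K + 1) × Fin (K + 1) => |h p.1 - h p.2|)
    (Finset.mem_univ ((0 : Fin (K + 1)), (0 : Fin (K + 1))))
  simpa [Dspread] using this

lemma abs_sub_le_Dspread (h : Fin (K + 1) → ℝ) (c d : Fin (K + 1)) :
    |h c - h d| ≤ Dspread h := by
  exact Finset.le_sup' (f := fun p : Fin (K + 1) × Fin (K + 1) => |h p.1 - h p.2|)
    (Finset.mem_univ (c, d))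

lemma centered_abs_le (π h : Fin (K + 1) → ℝ) (hπ0 : ∀ i, 0 ≤ π i) (hπ1 : ∑ i, π i = 1)
    (c : Fin (K + 1)) : |h c - ∑ j, π j * h j| ≤ Dspread h := by
  have hrw : h c - ∑ j, π j * h j = ∑ j, π j * (h c - h j) := by
    rw [Finset.sum_congr rfl (fun j _ => (mul_sub (π j) (h c) (h j) : _)),
      Finset.sum_sub_distrib, ← Finset.sum_mul, hπ1, one_mul]
  rw [hrw]
  calc |∑ j, π j * (h c - h j)| ≤ ∑ j, |π j * (h c - h j)| :=
        Finset.abs_sum_le_sum_abs _ _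
    _ ≤ ∑ j, π j * Dspread h := by
        apply Finset.sum_le_sum
        intro j _
        rw [abs_mul, abs_of_nonneg (hπ0 j)]
        exact mul_le_mul_of_nonneg_left (abs_sub_le_Dspread h c j) (hπ0 j)
    _ = Dspread h := by rw [← Finset.sum_mul, hπ1, one_mul]

lemma dev_abs_le (π h : Fin (K + 1) → ℝ) (hπ0 : ∀ i, 0 ≤ π i) (hπ1 : ∑ i, π i = 1)
    (hn : 0 < n) (ω : Fin n → Fin (K + 1)) :
    |∑ i, (freq ω i - π i) * h i| ≤ Dspread h := by
  have h1 : ∑ i, (freq ω i - π i) * h i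
      = ∑ i, freq ω i * (h i - ∑ j, π j * h j) := by
    rw [Finset.sum_congr rfl (fun i _ => (sub_mul (freq ω i) (π i) (h i) : _)),
      Finset.sum_sub_distrib,
      Finset.sum_congr rfl (fun i _ => (mul_sub (freq ω i) (h i) (∑ j, π j * h j) : _)),
      Finset.sum_sub_distrib, ← Finset.sum_mul, freq_total hn ω, one_mul]
  rw [h1]
  calc |∑ i, freq ω i * (h i - ∑ j, π j * h j)|
      ≤ ∑ i, |freq ω i * (h i - ∑ j, π j * h j)| := Finset.abs_sum_le_sum_abs _ _
    _ ≤ ∑ i, freq ω i * Dspread h := by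
        apply Finset.sum_le_sum
        intro i _
        rw [abs_mul, abs_of_nonneg (freq_nonneg ω i)]
        exact mul_le_mul_of_nonneg_left (centered_abs_le π h hπ0 hπ1 i) (freq_nonneg ω i)
    _ = Dspread h := by rw [← Finset.sum_mul, freq_total hn ω, one_mul]

lemma dev_rel (π h : Fin (K + 1) → ℝ) (hn : 0 < n) (ω : Fin n → Fin (K + 1)) :
    (n : ℝ) * (∑ i, (freq ω i - π i) * h i) = ∑ j, (h (ω j) - ∑ c, π c * h c) := by
  have h1 : ∑ i, (freq ω i - π i) * h i
      = (∑ i, freq ω i * h i) - ∑ i, π i * h i := by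
    rw [Finset.sum_congr rfl (fun i _ => (sub_mul (freq ω i) (π i) (h i) : _)),
      Finset.sum_sub_distrib]
  rw [h1, mul_sub, freq_mul_sum hn ω h, Finset.sum_sub_distrib, Finset.sum_const,
    Finset.card_univ, Fintype.card_fin, nsmul_eq_mul]

end Glue

lemma mgf_le (hπ0 : ∀ i, 0 ≤ π i) (hπ1 : ∑ i, π i = 1) (g : Fin (K + 1) → ℝ)
    (D σ2 l : ℝ) (hσ : ∑ c, π c * g c ^ 2 ≤ σ2) (hg0 : ∑ c, π c * g c = 0)
    (hgD : ∀ c, |g c| ≤ D) (hl : 0 ≤ l) (hlD : l * D ≤ 1) :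
    ∑ c, π c * Real.exp (l * g c) ≤ Real.exp (l ^ 2 * σ2 * Real.exp 1 / 2) := by
  have key : ∀ c, π c * Real.exp (l * g c)
      ≤ π c * (1 + l * g c + (l * g c) ^ 2 * Real.exp 1 / 2) := by
    intro c
    apply mul_le_mul_of_nonneg_left _ (hπ0 c)
    have h1 : l * g c ≤ 1 := by
      have := mul_le_mul_of_nonneg_left (le_trans (le_abs_self _) (hgD c)) hl
      linarith
    exact exp_quad h1 zero_le_one
  have hsum : ∑ c, π c * (1 + l * g c + (l * g c) ^ 2 * Real.exp 1 / 2)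
      = (∑ c, π c) + l * (∑ c, π c * g c)
        + (l ^ 2 * Real.exp 1 / 2) * ∑ c, π c * g c ^ 2 := by
    rw [Finset.mul_sum, Finset.mul_sum, ← Finset.sum_add_distrib, ← Finset.sum_add_distrib]
    exact Finset.sum_congr rfl fun c _ => by ring
  have hle : ∑ c, π c * Real.exp (l * g c)
      ≤ 1 + (l ^ 2 * σ2 * Real.exp 1 / 2) := by
    calc ∑ c, π c * Real.exp (l * g c)
        ≤ ∑ c, π c * (1 + l * g c + (l * g c) ^ 2 * Real.exp 1 / 2) :=
          Finset.sum_le_sum fun c _ => key c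
      _ = 1 + (∑ c, π c * g c ^ 2) * (l ^ 2 * Real.exp 1 / 2) := by
          rw [hsum, hπ1, hg0]; ring
      _ ≤ 1 + (l ^ 2 * σ2 * Real.exp 1 / 2) := by
          have h2 : (0:ℝ) ≤ l ^ 2 * Real.exp 1 / 2 := by positivity
          nlinarith
  exact hle.trans (by linarith [Real.add_one_le_exp (l ^ 2 * σ2 * Real.exp 1 / 2)])

lemma tail_core (hπ0 : ∀ i, 0 ≤ π i) (hπ1 : ∑ i, π i = 1) (g : Fin (K + 1) → ℝ)
    (D σ2 l a ε : ℝ) (hσ : ∑ c, π c * g c ^ 2 ≤ σ2) (hg0 : ∑ c, π c * g c = 0)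
    (hgD : ∀ c, |g c| ≤ D) (hl : 0 ≤ l) (hlD : l * D ≤ 1) (hε : 0 < ε)
    (hexp : -(l * a) + (n : ℝ) * (l ^ 2 * σ2 * Real.exp 1 / 2) ≤ Real.log (ε / 2)) :
    iidPr (n := n) π (fun ω => a < ∑ j, g (ω j)) ≤ ε / 2 := by
  have hch := chernoff (n := n) hπ0 g l a hl
  have hmgf := mgf_le hπ0 hπ1 g D σ2 l hσ hg0 hgD hl hlD
  have hXnn : 0 ≤ ∑ c, π c * Real.exp (l * g c) :=
    Finset.sum_nonneg fun c _ => mul_nonneg (hπ0 c) (Real.exp_pos _).le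
  calc iidPr (n := n) π (fun ω => a < ∑ j, g (ω j))
      ≤ Real.exp (-(l * a)) * (∑ c, π c * Real.exp (l * g c)) ^ n := hch
    _ ≤ Real.exp (-(l * a)) * (Real.exp (l ^ 2 * σ2 * Real.exp 1 / 2)) ^ n := by
        apply mul_le_mul_of_nonneg_left _ (Real.exp_pos _).le
        exact pow_le_pow_left₀ hXnn hmgf n
    _ = Real.exp (-(l * a) + (n : ℝ) * (l ^ 2 * σ2 * Real.exp 1 / 2)) := by
        rw [Real.exp_add, Real.exp_nat_mul]
    _ ≤ Real.exp (Real.log (ε / 2)) := Real.exp_le_exp.mpr hexp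
    _ = ε / 2 := Real.exp_log (by positivity)

set_option maxHeartbeats 2000000 in
lemma tail_bound (hn2 : 2 ≤ n) (hπ0 : ∀ i, 0 ≤ π i) (hπ1 : ∑ i, π i = 1)
    (g : Fin (K + 1) → ℝ) (D σ2 ε t : ℝ) (hD : 0 < D) (hσ0 : 0 ≤ σ2)
    (hσ : ∑ c, π c * g c ^ 2 ≤ σ2) (hg0 : ∑ c, π c * g c = 0)
    (hgD : ∀ c, |g c| ≤ D) (hε0 : 0 < ε) (hε1 : ε < 1)
    (ht : 2 * Real.sqrt (Real.logb 2 ((n : ℝ) / ε) * σ2 / n)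
        + 3 * D / n * Real.logb 2 (2 / ε) ≤ t) :
    iidPr (n := n) π (fun ω => (n : ℝ) * t < ∑ j, g (ω j)) ≤ ε / 2 := by
  have hn0 : (0:ℝ) < n := by
    have : (2:ℝ) ≤ n := by exact_mod_cast hn2
    linarith
  have hn2' : (2:ℝ) ≤ n := by exact_mod_cast hn2
  set u := Real.log (2 / ε) with hu_def
  have hu : 0 < u := Real.log_pos (by rw [lt_div_iff₀ hε0]; linarith)
  have hlog2 : 0 < Real.log 2 := Real.log_pos one_lt_two
  have hlog2u : Real.log 2 < 1 := by
    have := Real.log_two_lt_d9; linarith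
  have hL2 : Real.logb 2 (2 / ε) = u / Real.log 2 := by rw [Real.logb]
  set L1 := Real.logb 2 ((n : ℝ) / ε) with hL1_def
  have hL1 : u / Real.log 2 ≤ L1 := by
    rw [hL1_def, Real.logb, hu_def]
    have hlogle : Real.log (2 / ε) ≤ Real.log ((n : ℝ) / ε) :=
      Real.log_le_log (by positivity) (by gcongr)
    gcongr
  have hL1nn : 0 ≤ L1 := le_trans (by positivity) hL1
  have hs0 : (0:ℝ) ≤ 2 * Real.sqrt (L1 * σ2 / n) := by positivity
  have htB : 3 * D / n * (u / Real.log 2) ≤ t := by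
    rw [← hL2]; linarith
  have ht0 : 0 < t := by
    have : 0 < 3 * D / n * (u / Real.log 2) := by positivity
    linarith
  have htsq : 4 * (L1 * σ2 / n) ≤ t ^ 2 := by
    have h1 : 2 * Real.sqrt (L1 * σ2 / n) ≤ t := by
      have hpos : 0 < 3 * D / n * Real.logb 2 (2 / ε) := by rw [hL2]; positivity
      linarith
    have h2 : (2 * Real.sqrt (L1 * σ2 / n)) ^ 2 ≤ t ^ 2 := by
      apply pow_le_pow_left₀ hs0 h1
    rw [mul_pow, Real.sq_sqrt (by positivity)] at h2
    linarith
  have hE0 : (0:ℝ) < Real.exp 1 := Real.exp_pos 1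
  have hElog2 : Real.exp 1 * Real.log 2 ≤ 2 := by
    nlinarith [Real.exp_one_lt_d9, Real.log_two_lt_d9, Real.exp_pos 1, hlog2]
  have hlogε2 : Real.log (ε / 2) = -u := by
    rw [hu_def, ← Real.log_inv]
    congr 1
    field_simp
  rcases le_or_gt (D * t) (Real.exp 1 * σ2) with hcase | hcase
  · -- Case A : small t: use l = t / (E σ2)
    have hσpos : 0 < σ2 := by nlinarith
    set l := t / (Real.exp 1 * σ2) with hl_def
    have hl : 0 ≤ l := by positivity
    have hlD : l * D ≤ 1 := by
      rw [hl_def, div_mul_eq_mul_div, div_le_one (by positivity)]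
      linarith [hcase, (mul_comm t D : t * D = D * t)]
    apply tail_core hπ0 hπ1 g D σ2 l _ ε hσ hg0 hgD hl hlD hε0
    rw [hlogε2]
    have hkey : -(l * ((n:ℝ) * t)) + (n : ℝ) * (l ^ 2 * σ2 * Real.exp 1 / 2)
        = -((n:ℝ) * t ^ 2 / (2 * (Real.exp 1 * σ2))) := by
      rw [hl_def]
      field_simp
      ring
    rw [hkey, neg_le_neg_iff]
    rw [le_div_iff₀ (by positivity)]
    -- u * (2 * (E * σ2)) ≤ n * t^2
    have h4 : 4 * (L1 * σ2) ≤ (n:ℝ) * t ^ 2 := by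
      have := mul_le_mul_of_nonneg_left htsq hn0.le
      calc 4 * (L1 * σ2) = (n:ℝ) * (4 * (L1 * σ2 / n)) := by field_simp
        _ ≤ (n:ℝ) * t ^ 2 := this
    have h5 : u ≤ L1 * Real.log 2 := by
      rw [div_le_iff₀ hlog2] at hL1; linarith
    have hA1 : u * (2 * (Real.exp 1 * σ2)) ≤ (L1 * Real.log 2) * (2 * (Real.exp 1 * σ2)) :=
      mul_le_mul_of_nonneg_right h5 (by positivity)
    have hA2 : (L1 * Real.log 2) * (2 * (Real.exp 1 * σ2))
        = (L1 * σ2) * (2 * (Real.exp 1 * Real.log 2)) := by ring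
    have hEl : 2 * (Real.exp 1 * Real.log 2) ≤ 4 := by linarith
    have hA3 : (L1 * σ2) * (2 * (Real.exp 1 * Real.log 2)) ≤ (L1 * σ2) * 4 :=
      mul_le_mul_of_nonneg_left hEl (mul_nonneg hL1nn hσ0)
    have hA4 : (L1 * σ2) * 4 = 4 * (L1 * σ2) := by ring
    linarith
  · -- Case B : l = 1 / D
    set l := 1 / D with hl_def
    have hl : 0 ≤ l := by positivity
    have hlD : l * D ≤ 1 := by rw [hl_def]; field_simp; exact le_rfl
    apply tail_core hπ0 hπ1 g D σ2 l _ ε hσ hg0 hgD hl hlD hε0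
    rw [hlogε2]
    have hnt : 3 * D * (u / Real.log 2) ≤ (n:ℝ) * t := by
      have := mul_le_mul_of_nonneg_left htB hn0.le
      calc 3 * D * (u / Real.log 2) = (n:ℝ) * (3 * D / n * (u / Real.log 2)) := by
            field_simp
        _ ≤ (n:ℝ) * t := this
    have hnt2 : 3 * D * u ≤ (n:ℝ) * t := by
      have h6' : u ≤ u / Real.log 2 := by
        rw [le_div_iff₀ hlog2]
        exact mul_le_of_le_one_right hu.le hlog2u.le
      have h6 : 3 * D * u ≤ 3 * D * (u / Real.log 2) :=
        mul_le_mul_of_nonneg_left h6' (by positivity)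
      linarith
    have hkey : -(l * ((n:ℝ) * t)) + (n : ℝ) * (l ^ 2 * σ2 * Real.exp 1 / 2)
        = -((n:ℝ) * t / D) + (n:ℝ) * σ2 * Real.exp 1 / (2 * D ^ 2) := by
      rw [hl_def]; field_simp
    rw [hkey]
    have h7 : (n:ℝ) * σ2 * Real.exp 1 / (2 * D ^ 2) ≤ (n:ℝ) * t / (2 * D) := by
      rw [div_le_div_iff₀ (by positivity) (by positivity)]
      have h7' := mul_le_mul_of_nonneg_right hcase.le
        (by positivity : (0:ℝ) ≤ 2 * D * (n:ℝ))
      nlinarith [h7']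
    have h8 : u ≤ (n:ℝ) * t / (2 * D) := by
      rw [le_div_iff₀ (by positivity)]
      nlinarith [hnt2, mul_pos hD hu]

    have h9 : (n:ℝ) * t / D = (n:ℝ)*t/(2*D) + (n:ℝ)*t/(2*D) := by field_simp; ring
    linarith

/-- Multinomial concentration for affine statistics: with probability at least `1 − ε`,
`|(π̂ − π)ᵀh| ≤ 2√(log(n/ε)·Σᵢ γᵢcᵢ²/n) + (3D/n)·log(2/ε)`. -/
theorem multinomial_affine_concentration {K n : ℕ} (hn : 0 < n)
    (π : Fin (K + 1) → ℝ) (hπ0 : ∀ i, 0 ≤ π i) (hπ1 : ∑ i, π i = 1)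
    (h : Fin (K + 1) → ℝ) (ε : ℝ) (hε0 : 0 < ε) (hε1 : ε < 1) :
    1 - ε ≤ iidPr (n := n) π (fun ω =>
      |∑ i, (freq ω i - π i) * h i| ≤
        2 * Real.sqrt (Real.logb 2 ((n : ℝ) / ε) *
            ∑ i : Fin K, gammaCoef π i * (cCoef π h i) ^ 2 / (n : ℝ)) +
          (3 * Dspread h / (n : ℝ)) * Real.logb 2 (2 / ε)) := by
  classical
  set D := Dspread h with hD_def
  set μ := ∑ c, π c * h c with hμ_def
  set L1 := Real.logb 2 ((n : ℝ) / ε) with hL1_def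
  set L2 := Real.logb 2 (2 / ε) with hL2_def
  set σ2 := ∑ i : Fin K, gammaCoef π i * cCoef π h i ^ 2 with hσ2_def
  have hσeq : σ2 = ∑ c, π c * (h c - μ) ^ 2 := gamma_c_var hπ0 hπ1
  have hσ0 : 0 ≤ σ2 := by
    rw [hσeq]
    apply Finset.sum_nonneg
    intro c _
    exact mul_nonneg (hπ0 c) (sq_nonneg _)
  have hn0 : (0 : ℝ) < n := by exact_mod_cast hn
  have hDnn : 0 ≤ D := Dspread_nonneg h
  have hlog2 : 0 < Real.log 2 := Real.log_pos one_lt_two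
  have hL2u : Real.log 2 ≤ Real.log (2 / ε) :=
    Real.log_le_log two_pos (by rw [le_div_iff₀ hε0]; linarith)
  have hL2one : 1 ≤ L2 := by
    rw [hL2_def, Real.logb, le_div_iff₀ hlog2, one_mul]
    exact hL2u
  -- the bound appearing in the statement
  set B := 2 * Real.sqrt (L1 * ∑ i : Fin K, gammaCoef π i * (cCoef π h i) ^ 2 / (n : ℝ))
      + (3 * D / (n : ℝ)) * L2 with hB_def
  have hBsum : (∑ i : Fin K, gammaCoef π i * (cCoef π h i) ^ 2 / (n : ℝ)) = σ2 / n := by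
    rw [hσ2_def, Finset.sum_div]
  have hBt : B = 2 * Real.sqrt (L1 * σ2 / (n : ℝ)) + 3 * D / (n : ℝ) * L2 := by
    rw [hB_def, hBsum, ← mul_div_assoc]
  -- trivial case helper
  have htrivial : D ≤ 3 * D / (n : ℝ) * L2 → 1 - ε ≤ iidPr (n := n) π (fun ω =>
      |∑ i, (freq ω i - π i) * h i| ≤ B) := by
    intro hDB
    have hall : ∀ ω : Fin n → Fin (K + 1), |∑ i, (freq ω i - π i) * h i| ≤ B := by
      intro ω
      have h1 := dev_abs_le π h hπ0 hπ1 hn ω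
      have h2 : 0 ≤ 2 * Real.sqrt (L1 * σ2 / (n : ℝ)) := by positivity
      rw [hBt]
      calc |∑ i, (freq ω i - π i) * h i| ≤ D := h1
        _ ≤ 3 * D / (n : ℝ) * L2 := hDB
        _ ≤ _ := by linarith
    have hone : iidPr (n := n) π (fun ω => |∑ i, (freq ω i - π i) * h i| ≤ B) = 1 := by
      unfold iidPr
      rw [Finset.filter_true_of_mem (fun ω _ => hall ω), sum_prod_pi hπ1]
    rw [hone]
    linarith
  by_cases hn1 : n = 1
  · apply htrivial
    subst hn1
    push_cast
    nlinarith
  by_cases hD0 : D = 0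
  · apply htrivial
    rw [hD0]
    simp
  -- main case
  have hn2 : 2 ≤ n := by omega
  have hDpos : 0 < D := lt_of_le_of_ne hDnn (Ne.symm hD0)
  set g : Fin (K + 1) → ℝ := fun c => h c - μ with hg_def
  have hg0 : ∑ c, π c * g c = 0 := by
    rw [hg_def]
    simp only []
    rw [Finset.sum_congr rfl (fun c _ => (mul_sub (π c) (h c) μ : _)),
      Finset.sum_sub_distrib, ← Finset.sum_mul, hπ1, one_mul, ← hμ_def, sub_self]
  have hσle : ∑ c, π c * g c ^ 2 ≤ σ2 := le_of_eq hσeq.symm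
  have hgD : ∀ c, |g c| ≤ D := fun c => centered_abs_le π h hπ0 hπ1 c
  have hgN0 : ∑ c, π c * (-g) c = 0 := by
    simp only [Pi.neg_apply, mul_neg]
    rw [Finset.sum_neg_distrib, hg0, neg_zero]
  have hσleN : ∑ c, π c * ((-g) c) ^ 2 ≤ σ2 := by
    simp only [Pi.neg_apply, neg_sq]
    exact hσle
  have hgDN : ∀ c, |(-g) c| ≤ D := fun c => by
    rw [Pi.neg_apply, abs_neg]; exact hgD c
  have hht : 2 * Real.sqrt (L1 * σ2 / (n : ℝ)) + 3 * D / (n : ℝ) * L2 ≤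
      2 * Real.sqrt (L1 * σ2 / (n : ℝ)) + 3 * D / (n : ℝ) * L2 := le_refl _
  have htail1 := tail_bound hn2 hπ0 hπ1 g D σ2 ε
    (2 * Real.sqrt (L1 * σ2 / (n : ℝ)) + 3 * D / (n : ℝ) * L2)
    hDpos hσ0 hσle hg0 hgD hε0 hε1 hht
  have htail2 := tail_bound hn2 hπ0 hπ1 (-g) D σ2 ε
    (2 * Real.sqrt (L1 * σ2 / (n : ℝ)) + 3 * D / (n : ℝ) * L2)
    hDpos hσ0 hσleN hgN0 hgDN hε0 hε1 hht
  set t := 2 * Real.sqrt (L1 * σ2 / (n : ℝ)) + 3 * D / (n : ℝ) * L2 with ht_def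
  have himp : ∀ ω : Fin n → Fin (K + 1),
      (¬ |∑ i, (freq ω i - π i) * h i| ≤ B) →
      ((n : ℝ) * t < ∑ j, g (ω j) ∨ (n : ℝ) * t < ∑ j, (-g) (ω j)) := by
    intro ω hω
    rw [not_le] at hω
    have hrel := dev_rel π h hn ω
    set dv := ∑ i, (freq ω i - π i) * h i with hdv_def
    have hgsum : ∑ j, g (ω j) = (n : ℝ) * dv := by
      rw [hg_def]
      simp only []
      rw [hrel]
    have hBlt : B < |dv| := hω
    rw [hBt] at hBlt
    rcases lt_abs.mp hBlt with hpos | hneg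
    · left
      rw [hgsum]
      exact mul_lt_mul_of_pos_left hpos hn0
    · right
      have : ∑ j, (-g) (ω j) = (n : ℝ) * (-dv) := by
        simp only [Pi.neg_apply]
        rw [Finset.sum_neg_distrib, hgsum]
        ring
      rw [this]
      exact mul_lt_mul_of_pos_left hneg hn0
  have hcompl := iidPr_add_compl hπ1 (fun ω : Fin n → Fin (K + 1) =>
    |∑ i, (freq ω i - π i) * h i| ≤ B)
  have hmono := iidPr_mono (n := n) hπ0 himp
  have hunion := iidPr_union (n := n) hπ0
    (A := fun ω : Fin n → Fin (K + 1) => (n : ℝ) * t < ∑ j, g (ω j))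
    (B := fun ω : Fin n → Fin (K + 1) => (n : ℝ) * t < ∑ j, (-g) (ω j))
  have hbad : iidPr (n := n) π (fun ω => ¬ |∑ i, (freq ω i - π i) * h i| ≤ B) ≤ ε := by
    calc iidPr (n := n) π (fun ω => ¬ |∑ i, (freq ω i - π i) * h i| ≤ B)
        ≤ iidPr (n := n) π (fun ω =>
            (n : ℝ) * t < ∑ j, g (ω j) ∨ (n : ℝ) * t < ∑ j, (-g) (ω j)) := hmono
      _ ≤ iidPr (n := n) π (fun ω => (n : ℝ) * t < ∑ j, g (ω j))
          + iidPr (n := n) π (fun ω => (n : ℝ) * t < ∑ j, (-g) (ω j)) := hunion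
      _ ≤ ε / 2 + ε / 2 := add_le_add htail1 htail2
      _ = ε := by ring
  linarith

end
end
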